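/- Let y : ℝ → ℝ be twice continuously differentiable with compact support. Then ∫_ℝ y''(x)·sgn(y(x)) dx ≤ 0, where sgn(r) = r/|r| for r ≠ 0 and sgn(0) = 0. -/

import Mathlib

open MeasureTheory

namespace KatoAux

noncomputable def s (ε t : ℝ) : ℝ := Real.sqrt (t ^ 2 + ε ^ 2)

noncomputable def φ (ε t : ℝ) : ℝ := t / s ε t

noncomputable def ψ (ε t : ℝ) : ℝ := (1 * s ε t - t * (t / s ε t)) / (s ε t) ^ 2

lemma s_pos {ε : ℝ} (hε : 0 < ε) (t : ℝ) : 0 < s ε t :=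
  Real.sqrt_pos.mpr (by positivity)

lemma s_sq {ε : ℝ} (hε : 0 < ε) (t : ℝ) : s ε t ^ 2 = t ^ 2 + ε ^ 2 := by
  rw [s, Real.sq_sqrt (by positivity)]

lemma hasDerivAt_s {ε : ℝ} (hε : 0 < ε) (t : ℝ) :
    HasDerivAt (s ε) (t / s ε t) t := by
  have h : HasDerivAt (fun t : ℝ => t ^ 2 + ε ^ 2) (2 * t) t := by
    simpa using ((hasDerivAt_pow 2 t).add_const (ε ^ 2))
  have := h.sqrt (by positivity)
  have hs := s_pos hε t
  convert this using 1
  · rfl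
  · rw [s]; field_simp [s] at *

lemma hasDerivAt_φ {ε : ℝ} (hε : 0 < ε) (t : ℝ) :
    HasDerivAt (φ ε) (ψ ε t) t := by
  have hs := s_pos hε t
  exact (hasDerivAt_id t).div (hasDerivAt_s hε t) hs.ne'

lemma ψ_nonneg {ε : ℝ} (hε : 0 < ε) (t : ℝ) : 0 ≤ ψ ε t := by
  have hs := s_pos hε t
  have hsq := s_sq hε t
  rw [ψ]
  apply div_nonneg _ (by positivity)
  have h : t * (t / s ε t) = t ^ 2 / s ε t := by ring
  rw [h, one_mul, sub_nonneg, div_le_iff₀ hs]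
  nlinarith [hsq, sq_nonneg ε]

lemma abs_φ_le {ε : ℝ} (hε : 0 < ε) (t : ℝ) : |φ ε t| ≤ 1 := by
  have hs := s_pos hε t
  rw [φ, abs_div, abs_of_pos hs, div_le_one hs]
  have : |t| = Real.sqrt (t ^ 2) := by rw [Real.sqrt_sq_eq_abs]
  rw [this, s]
  exact Real.sqrt_le_sqrt (by nlinarith [sq_nonneg ε])

lemma contDiff_s {ε : ℝ} (hε : 0 < ε) : ContDiff ℝ 1 (s ε) := by
  rw [contDiff_iff_contDiffAt]
  intro t
  have h1 : ContDiffAt ℝ 1 (fun t : ℝ => t ^ 2 + ε ^ 2) t :=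
    ((contDiff_id.pow 2).add contDiff_const).contDiffAt
  exact (Real.contDiffAt_sqrt (by positivity)).comp t h1

lemma contDiff_φ {ε : ℝ} (hε : 0 < ε) : ContDiff ℝ 1 (φ ε) :=
  contDiff_id.div (contDiff_s hε) (fun t => (s_pos hε t).ne')

lemma continuous_ψ {ε : ℝ} (hε : 0 < ε) : Continuous (ψ ε) := by
  have hs := (contDiff_s hε).continuous
  apply Continuous.div
  · exact ((continuous_const.mul hs).sub
      (continuous_id.mul (continuous_id.div hs fun t => (s_pos hε t).ne')))
  · exact hs.pow 2
  · exact fun t => pow_ne_zero 2 (s_pos hε t).ne'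

/-- Integration by parts step: for each ε > 0 the regularized integral is ≤ 0. -/
lemma key (y : ℝ → ℝ) (hy : ContDiff ℝ 2 y) (hsupp : HasCompactSupport y)
    {ε : ℝ} (hε : 0 < ε) :
    ∫ x : ℝ, deriv (deriv y) x * φ ε (y x) ≤ 0 := by
  have hy' : ContDiff ℝ 1 (deriv y) := by
    have := (contDiff_succ_iff_deriv (n := 1)).mp (by exact_mod_cast hy)
    exact this.2.2
  have hy'' : Continuous (deriv (deriv y)) := by
    have := (contDiff_succ_iff_deriv (n := 0)).mp (by exact_mod_cast hy')
    exact this.2.2.continuous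
  have hydiff : Differentiable ℝ y := hy.differentiable (by norm_num)
  have hy'diff : Differentiable ℝ (deriv y) := hy'.differentiable one_ne_zero
  -- g is the product whose derivative we integrate
  set g : ℝ → ℝ := fun x => deriv y x * φ ε (y x) with hg_def
  have hgC : ContDiff ℝ 1 g :=
    hy'.mul ((contDiff_φ hε).comp (hy.of_le (by norm_num)))
  have hgsupp : HasCompactSupport g := hsupp.deriv.mul_right
  have hgderiv : ∀ x : ℝ, HasDerivAt g
      (deriv (deriv y) x * φ ε (y x) + deriv y x * (ψ ε (y x) * deriv y x)) x := by
    intro x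
    have h1 : HasDerivAt (deriv y) (deriv (deriv y) x) x := (hy'diff x).hasDerivAt
    have h2 : HasDerivAt (fun x => φ ε (y x)) (ψ ε (y x) * deriv y x) x :=
      (hasDerivAt_φ hε (y x)).comp x (hydiff x).hasDerivAt
    exact h1.mul h2
  have hderiv_g : deriv g = fun x =>
      deriv (deriv y) x * φ ε (y x) + deriv y x * (ψ ε (y x) * deriv y x) :=
    funext fun x => (hgderiv x).deriv
  -- integrability facts
  have hφy_cont : Continuous (fun x => φ ε (y x)) :=
    (contDiff_φ hε).continuous.comp hy.continuous
  have hint1 : Integrable (fun x => deriv (deriv y) x * φ ε (y x)) :=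
    (hy''.mul hφy_cont).integrable_of_hasCompactSupport hsupp.deriv.deriv.mul_right
  have hint2 : Integrable (fun x => deriv y x * (ψ ε (y x) * deriv y x)) :=
    (hy'.continuous.mul
        (((continuous_ψ hε).comp hy.continuous).mul hy'.continuous)
      ).integrable_of_hasCompactSupport hsupp.deriv.mul_right
  -- integral of deriv g over ℝ is 0
  have hintg : Integrable (deriv g) := by
    rw [hderiv_g]; exact hint1.add hint2
  have hzero : ∫ x : ℝ, deriv g x = 0 := by
    have h1 := hgsupp.integral_Iic_deriv_eq hgC (0 : ℝ)
    have h2 := hgsupp.integral_Ioi_deriv_eq hgC (0 : ℝ)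
    have := intervalIntegral.integral_Iic_add_Ioi (b := (0 : ℝ)) hintg.integrableOn hintg.integrableOn
    rw [h1, h2] at this
    linarith [this]
  have hsplit : (∫ x : ℝ, deriv (deriv y) x * φ ε (y x))
      = (∫ x : ℝ, deriv g x) - ∫ x : ℝ, deriv y x * (ψ ε (y x) * deriv y x) := by
    rw [hderiv_g, integral_add hint1 hint2]
    ring
  rw [hsplit, hzero, zero_sub, neg_nonpos]
  apply integral_nonneg
  intro x
  simp only [Pi.zero_apply]
  nlinarith [ψ_nonneg hε (y x), sq_nonneg (deriv y x)]

lemma φ_tendsto_sign (t : ℝ) :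
    Filter.Tendsto (fun n : ℕ => φ (1 / (n + 1)) t) Filter.atTop (nhds (Real.sign t)) := by
  rcases eq_or_ne t 0 with rfl | ht
  · simp [φ, Real.sign_zero]
  · have habs : (0 : ℝ) < |t| := abs_pos.mpr ht
    have hεtend : Filter.Tendsto (fun n : ℕ => (1 : ℝ) / (n + 1)) Filter.atTop (nhds 0) :=
      tendsto_one_div_add_atTop_nhds_zero_nat
    have hs : Filter.Tendsto (fun n : ℕ => s (1 / (n + 1)) t) Filter.atTop (nhds |t|) := by
      have harg : Filter.Tendsto (fun n : ℕ => t ^ 2 + (1 / ((n : ℝ) + 1)) ^ 2)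
          Filter.atTop (nhds (t ^ 2)) := by
        have := (hεtend.pow 2).const_add (t ^ 2)
        simpa using this
      have := (Real.continuous_sqrt.tendsto (t ^ 2)).comp harg
      simpa [s, Real.sqrt_sq_eq_abs, Function.comp_def] using this
    have hdiv : Filter.Tendsto (fun n : ℕ => t / s (1 / (n + 1)) t)
        Filter.atTop (nhds (t / |t|)) := tendsto_const_nhds.div hs habs.ne'
    have hsign : t / |t| = Real.sign t := by
      rcases lt_trichotomy t 0 with h | h | h
      · rw [abs_of_neg h, Real.sign_of_neg h]; field_simp
      · exact absurd h ht
      · rw [abs_of_pos h, Real.sign_of_pos h]; field_simp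
    rw [← hsign]
    exact hdiv

end KatoAux

open KatoAux in
theorem kato_inequality_1d
    (y : ℝ → ℝ) (hy : ContDiff ℝ 2 y) (hsupp : HasCompactSupport y) :
    ∫ x : ℝ, deriv (deriv y) x * Real.sign (y x) ≤ 0 := by
  have hy' : ContDiff ℝ 1 (deriv y) := by
    have := (contDiff_succ_iff_deriv (n := 1)).mp (by exact_mod_cast hy)
    exact this.2.2
  have hy'' : Continuous (deriv (deriv y)) := by
    have := (contDiff_succ_iff_deriv (n := 0)).mp (by exact_mod_cast hy')
    exact this.2.2.continuous
  have hbound : Integrable (fun x => |deriv (deriv y) x|) :=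
    (hy''.integrable_of_hasCompactSupport hsupp.deriv.deriv).abs
  have hεpos : ∀ n : ℕ, (0 : ℝ) < 1 / (n + 1) := fun n => by positivity
  set F : ℕ → ℝ → ℝ := fun n x => deriv (deriv y) x * φ (1 / (n + 1)) (y x) with hF
  have htend : Filter.Tendsto (fun n => ∫ x : ℝ, F n x) Filter.atTop
      (nhds (∫ x : ℝ, deriv (deriv y) x * Real.sign (y x))) := by
    apply tendsto_integral_of_dominated_convergence (fun x => |deriv (deriv y) x|)
    · intro n
      exact (hy''.mul ((contDiff_φ (hεpos n)).continuous.comp hy.continuous)).aestronglyMeasurable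
    · exact hbound
    · intro n
      filter_upwards with x
      rw [Real.norm_eq_abs, abs_mul]
      calc |deriv (deriv y) x| * |φ (1 / (n + 1)) (y x)|
          ≤ |deriv (deriv y) x| * 1 :=
            mul_le_mul_of_nonneg_left (abs_φ_le (hεpos n) (y x)) (abs_nonneg _)
        _ = |deriv (deriv y) x| := mul_one _
    · filter_upwards with x
      exact (φ_tendsto_sign (y x)).const_mul (deriv (deriv y) x)
  have hle : ∀ n : ℕ, (∫ x : ℝ, F n x) ≤ 0 := fun n => key y hy hsupp (hεpos n)
  exact le_of_tendsto' htend hle
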